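/- arXiv:1408.3074 — 7 statements merged into one kernel-verified Lean document; each statement's English description precedes it below -/
import Mathlib

section
/- Let G be a simple graph without isolated vertices and let f be an IASI of G. Then f is a weak IASI if and only if for every edge uv of G at least one of the set-labels f(u), f(v) is a singleton. -/
open Pointwise

/-- The induced set-label on (potential) edges: the sumset of the end-vertex labels. -/
def edgeLabel {V : Type*} (f : V → Finset ℕ) : Sym2 V → Finset ℕ :=
  Sym2.lift ⟨fun u v => f u + f v, fun u v => add_comm (f u) (f v)⟩

/-- An integer additive set-indexer (IASI) of a simple graph `G`: an injective assignment
of nonempty finite sets of non-negative integers to the vertices such that the induced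
sumset-labeling of the edges is also injective. -/
structure IsIASI {V : Type*} (G : SimpleGraph V) (f : V → Finset ℕ) : Prop where
  nonempty : ∀ v, (f v).Nonempty
  inj : Function.Injective f
  edgeInj : Set.InjOn (edgeLabel f) G.edgeSet

/-- A weak IASI: an IASI for which every edge label has cardinality equal to the maximum of
the cardinalities of the labels of its end vertices. -/
structure IsWeakIASI {V : Type*} (G : SimpleGraph V) (f : V → Finset ℕ) extends
    IsIASI G f : Prop where
  weak : ∀ ⦃u v⦄, G.Adj u v → (f u + f v).card = max (f u).card (f v).card

/-- The number of mono-indexed edges of `G` under the labeling `f`, i.e. the number of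
edges whose set-label is a singleton. -/
noncomputable def monoEdgeCount {V : Type*} (G : SimpleGraph V) (f : V → Finset ℕ) : ℕ :=
  {e ∈ G.edgeSet | (edgeLabel f e).card = 1}.ncard

/-- The sparing number of `G`: the minimum number of mono-indexed edges taken over all
weak IASIs of `G`. -/
noncomputable def sparingNumber {V : Type*} (G : SimpleGraph V) : ℕ :=
  sInf {k | ∃ f : V → Finset ℕ, IsWeakIASI G f ∧ monoEdgeCount G f = k}

/-- For a graph `G` without isolated vertices and an IASI `f` of `G`, `f` is a weak IASI
if and only if every edge of `G` has at least one end vertex with a singleton set-label. -/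
theorem isWeakIASI_iff_singleton_end {V : Type*} (G : SimpleGraph V)
    (hiso : ∀ v : V, ∃ u, G.Adj v u) (f : V → Finset ℕ) (hf : IsIASI G f) :
    IsWeakIASI G f ↔ ∀ ⦃u v⦄, G.Adj u v → (f u).card = 1 ∨ (f v).card = 1 := by
  constructor
  · intro hw u v huv
    by_contra h
    push_neg at h
    obtain ⟨h1, h2⟩ := h
    have hu := hf.nonempty u
    have hv := hf.nonempty v
    have h1' : 2 ≤ (f u).card := by have := Finset.card_pos.mpr hu; omega
    have h2' : 2 ≤ (f v).card := by have := Finset.card_pos.mpr hv; omega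
    have hcd := cauchy_davenport_add_of_linearOrder_isCancelAdd hu hv
    have hweak := hw.weak huv
    rw [hweak] at hcd
    omega
  · intro h
    refine ⟨hf, ?_⟩
    intro u v huv
    rcases h huv with h1 | h1
    · obtain ⟨a, ha⟩ := Finset.card_eq_one.mp h1
      rw [ha, Finset.card_singleton_add]
      simp only [Finset.card_singleton]
      have : 1 ≤ (f v).card := Finset.card_pos.mpr (hf.nonempty v)
      omega
    · obtain ⟨a, ha⟩ := Finset.card_eq_one.mp h1
      rw [ha, Finset.card_add_singleton]
      simp only [Finset.card_singleton]
      have : 1 ≤ (f u).card := Finset.card_pos.mpr (hf.nonempty u)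
      omega
end

section
/- Let G be a connected simple graph admitting a weak IASI f. Then G is bipartite or G has at least one edge that is mono-indexed under f. -/
open Pointwise

/-- If a connected graph `G` admits a weak IASI `f`, then `G` is bipartite
(i.e. 2-colorable) or `G` has at least one mono-indexed edge under `f`. -/
theorem bipartite_or_exists_monoIndexed_edge {V : Type*} (G : SimpleGraph V)
    (hconn : G.Connected) (f : V → Finset ℕ) (hf : IsWeakIASI G f) :
    G.Colorable 2 ∨ ∃ u v, G.Adj u v ∧ (f u + f v).card = 1 := by
  by_cases hmono : ∃ u v, G.Adj u v ∧ (f u + f v).card = 1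
  · exact Or.inr hmono
  push_neg at hmono
  left
  have key : ∀ ⦃u v⦄, G.Adj u v → ((f u).card = 1 ↔ ¬ (f v).card = 1) := by
    intro u v huv
    have h1 : 1 ≤ (f u).card := (hf.nonempty u).card_pos
    have h2 : 1 ≤ (f v).card := (hf.nonempty v).card_pos
    have hcd : (f u).card + (f v).card - 1 ≤ (f u + f v).card :=
      cauchy_davenport_add_of_linearOrder_isCancelAdd (hf.nonempty u) (hf.nonempty v)
    rw [hf.weak huv] at hcd
    have hboth : ¬ ((f u).card = 1 ∧ (f v).card = 1) := by
      rintro ⟨ha, hb⟩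
      exact hmono u v huv (by rw [hf.weak huv, ha, hb]; simp)
    constructor
    · intro ha hb
      exact hboth ⟨ha, hb⟩
    · intro hb
      rcases max_cases (f u).card (f v).card with ⟨hm, _⟩ | ⟨hm, _⟩ <;> rw [hm] at hcd <;> omega
  exact ⟨SimpleGraph.Coloring.mk (fun v => if (f v).card = 1 then 0 else 1) (by
    intro u v huv
    simp only [ne_eq]
    by_cases h : (f u).card = 1
    · have := (key huv).mp h
      simp [h, this]
    · have : (f v).card = 1 := by
        by_contra h'
        exact h ((key huv).mpr h')
      simp [h, this])⟩
end

section
/- Let C_n be the cycle on n vertices (n ≥ 3) and let f be a weak IASI of C_n. If n is odd, then the number of edges of C_n that are mono-indexed under f is odd; if n is even, then the number of mono-indexed edges is even. -/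
open Pointwise

/-- Let `f` be a weak IASI of the cycle `C n` (`n ≥ 3`). If `n` is odd, the number of
mono-indexed edges is odd; if `n` is even, the number of mono-indexed edges is even. -/
theorem cycle_monoEdgeCount_parity (n : ℕ) (hn : 3 ≤ n) (f : Fin n → Finset ℕ)
    (hf : IsWeakIASI (SimpleGraph.cycleGraph n) f) :
    (Odd n → Odd (monoEdgeCount (SimpleGraph.cycleGraph n) f)) ∧
    (Even n → Even (monoEdgeCount (SimpleGraph.cycleGraph n) f)) := by
  haveI : NeZero n := ⟨by omega⟩
  set G := SimpleGraph.cycleGraph n with hG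
  have hone : ((1 : Fin n) : ℕ) = 1 := by
    rw [Fin.val_one']
    exact Nat.mod_eq_of_lt (by omega)
  -- adjacency of i and i+1
  have hadj : ∀ i : Fin n, G.Adj i (i + 1) := by
    intro i
    rw [hG, SimpleGraph.cycleGraph_adj']
    right
    rw [add_sub_cancel_left, hone]
  -- on each edge, at least one endpoint is mono-indexed
  have key : ∀ ⦃u v : Fin n⦄, G.Adj u v → (f u).card = 1 ∨ (f v).card = 1 := by
    intro u v huv
    have h1 := hf.weak huv
    have h2 : (f u).card + (f v).card - 1 ≤ (f u + f v).card :=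
      cauchy_davenport_add_of_linearOrder_isCancelAdd (hf.nonempty u) (hf.nonempty v)
    have hu := Finset.card_pos.mpr (hf.nonempty u)
    have hv := Finset.card_pos.mpr (hf.nonempty v)
    omega
  -- an edge is mono-indexed iff both endpoints are
  have mono_iff : ∀ ⦃u v : Fin n⦄, G.Adj u v →
      ((f u + f v).card = 1 ↔ (f u).card = 1 ∧ (f v).card = 1) := by
    intro u v huv
    have h1 := hf.weak huv
    have hu := Finset.card_pos.mpr (hf.nonempty u)
    have hv := Finset.card_pos.mpr (hf.nonempty v)
    omega
  classical
  set P : Fin n → Prop := fun i => (f i).card = 1 ∧ (f (i + 1)).card = 1 with hP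
  -- compute monoEdgeCount as a finset card
  have hset : {e ∈ G.edgeSet | (edgeLabel f e).card = 1} =
      ↑((Finset.univ.filter P).image (fun i : Fin n => s(i, i + 1))) := by
    ext e
    induction e with
    | _ u v =>
      simp only [Set.mem_setOf_eq, Finset.coe_image, Set.mem_image, Finset.mem_coe,
        Finset.mem_filter, Finset.mem_univ, true_and, SimpleGraph.mem_edgeSet]
      constructor
      · rintro ⟨huv, hcard⟩
        have hlabel : edgeLabel f s(u, v) = f u + f v := rfl
        rw [hlabel] at hcard
        have hadj' := huv
        rw [hG, SimpleGraph.cycleGraph_adj'] at hadj'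
        rcases hadj' with h | h
        · -- u - v = 1, so u = v + 1
          have : u - v = 1 := Fin.ext (by rw [hone]; exact h)
          have hu : u = v + 1 := by
            rw [sub_eq_iff_eq_add] at this; rw [this, add_comm]
          obtain ⟨hcu, hcv⟩ := (mono_iff huv).mp hcard
          refine ⟨v, ?_, ?_⟩
          · simp only [hP]
            refine ⟨hcv, ?_⟩
            rw [← hu]; exact hcu
          · rw [← hu, Sym2.eq_swap]
        · -- v - u = 1, so v = u + 1
          have : v - u = 1 := Fin.ext (by rw [hone]; exact h)
          have hv : v = u + 1 := by
            rw [sub_eq_iff_eq_add] at this; rw [this, add_comm]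
          obtain ⟨hcu, hcv⟩ := (mono_iff huv).mp hcard
          refine ⟨u, ?_, ?_⟩
          · simp only [hP]
            refine ⟨hcu, ?_⟩
            rw [← hv]; exact hcv
          · rw [← hv]
      · rintro ⟨i, hi, he⟩
        have he' : s(i, i + 1) = s(u, v) := he
        have hadji := hadj i
        have hcard : (f i + f (i + 1)).card = 1 := (mono_iff hadji).mpr hi
        constructor
        · rw [← SimpleGraph.mem_edgeSet, ← he']
          exact hadji
        · have hlc : (edgeLabel f s(i, i + 1)).card = (edgeLabel f s(u, v)).card :=
            congrArg (fun e => (edgeLabel f e).card) he'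
          rw [← hlc]
          exact hcard
  have hinj : Set.InjOn (fun i : Fin n => s(i, i + 1)) ↑(Finset.univ.filter P) := by
    intro i _ j _ hij
    simp only [Sym2.eq, Sym2.rel_iff', Prod.mk.injEq, Prod.swap_prod_mk] at hij
    rcases hij with ⟨h, _⟩ | ⟨h1, h2⟩
    · exact h
    · exfalso
      have : i = i + 1 + 1 := by rw [h2, h1]
      have h2z : (1 + 1 : Fin n) = 0 := by
        have := (left_eq_add).mp (by rw [add_assoc] at this; exact this)
        exact this
      have : ((1 + 1 : Fin n) : ℕ) = 0 := by rw [h2z]; rfl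
      rw [Fin.val_add, hone, Nat.mod_eq_of_lt (by omega)] at this
      omega
  have hcount : monoEdgeCount G f = (Finset.univ.filter P).card := by
    rw [monoEdgeCount, hset, Set.ncard_coe_finset, Finset.card_image_of_injOn hinj]
  -- parity counting
  set k := (Finset.univ.filter (fun i : Fin n => ¬ (f i).card = 1)).card with hk
  have hshift : (Finset.univ.filter (fun i : Fin n => ¬ (f (i + 1)).card = 1)).card = k := by
    apply Finset.card_bij (fun i _ => i + 1)
    · intro a ha
      simp only [Finset.mem_filter, Finset.mem_univ, true_and] at ha ⊢
      exact ha
    · intro a _ b _ hab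
      exact add_right_cancel hab
    · intro b hb
      simp only [Finset.mem_filter, Finset.mem_univ, true_and] at hb ⊢
      exact ⟨b - 1, by rw [sub_add_cancel]; exact hb, sub_add_cancel b 1⟩
  have hsplit : (Finset.univ.filter P).card + 2 * k = n := by
    have hdisj : Disjoint (Finset.univ.filter (fun i : Fin n => ¬ (f i).card = 1))
        (Finset.univ.filter (fun i : Fin n => ¬ (f (i + 1)).card = 1)) := by
      rw [Finset.disjoint_filter]
      intro i _ hi hi1
      rcases key (hadj i) with h | h
      · exact hi h
      · exact hi1 h
    have hcompl : Finset.univ.filter (fun i : Fin n => ¬ P i) =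
        (Finset.univ.filter (fun i : Fin n => ¬ (f i).card = 1)) ∪
        (Finset.univ.filter (fun i : Fin n => ¬ (f (i + 1)).card = 1)) := by
      rw [← Finset.filter_or]
      apply Finset.filter_congr
      intro i _
      rw [hP]
      tauto
    have h1 : (Finset.univ.filter P).card + (Finset.univ.filter (fun i : Fin n => ¬ P i)).card
        = n := by
      rw [Finset.card_filter_add_card_filter_not, Finset.card_univ, Fintype.card_fin]
    rw [hcompl, Finset.card_union_of_disjoint hdisj, hshift] at h1
    omega
  rw [← hG] at *
  constructor
  · intro hodd
    rw [hcount]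
    rw [Nat.odd_iff] at hodd ⊢
    omega
  · intro heven
    rw [hcount]
    rw [Nat.even_iff] at heven ⊢
    omega
end

section
/- Let C_n be the cycle on n vertices (n ≥ 3). The sparing number of C_n is φ(C_n) = 0 if n is even and φ(C_n) = 1 if n is odd. -/
open Pointwise

namespace CycleSparing

open Finset SimpleGraph Pointwise

lemma pow4_inj : Function.Injective (fun k : ℕ => 4 ^ k) :=
  fun _ _ h => Nat.pow_right_injective (by norm_num) h

/-- The vertex labeling: even-index vertices get a singleton, odd-index vertices a pair. -/
def F (n : ℕ) (u : Fin n) : Finset ℕ :=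
  if u.val % 2 = 0 then {4 ^ u.val} else {4 ^ u.val, 4 ^ u.val + 1}

lemma F_nonempty (n : ℕ) (u : Fin n) : (F n u).Nonempty := by
  unfold F; split <;> simp

lemma card_pair' (a : ℕ) : ({a, a + 1} : Finset ℕ).card = 2 := by
  rw [Finset.card_insert_of_notMem (by simp), Finset.card_singleton]

lemma F_card (n : ℕ) (u : Fin n) :
    (F n u).card = if u.val % 2 = 0 then 1 else 2 := by
  unfold F; split
  · simp
  · exact card_pair' _

lemma mem_F {n : ℕ} {u : Fin n} {x : ℕ} (hx : x ∈ F n u) :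
    x = 4 ^ u.val ∨ x = 4 ^ u.val + 1 := by
  unfold F at hx; split at hx <;> simp at hx <;> tauto

lemma base_mem_F (n : ℕ) (u : Fin n) : 4 ^ u.val ∈ F n u := by
  unfold F; split <;> simp

lemma F_inj (n : ℕ) : Function.Injective (F n) := by
  intro u v h
  have h1 : (4 : ℕ) ^ u.val ∈ F n v := h ▸ base_mem_F n u
  have h2 : (4 : ℕ) ^ v.val ∈ F n u := h.symm ▸ base_mem_F n v
  have h1 := mem_F h1
  have h2 := mem_F h2
  have : (4 : ℕ) ^ u.val = 4 ^ v.val := by omega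
  exact Fin.val_injective (pow4_inj this)

lemma ss (a b : ℕ) : ({a} : Finset ℕ) + {b} = {a + b} := by
  ext x; simp [Finset.mem_add]

lemma sp (a b : ℕ) : ({a} : Finset ℕ) + {b, b + 1} = {a + b, a + b + 1} := by
  ext x; simp [Finset.mem_add]; omega

lemma ps (a c : ℕ) : ({a, a + 1} : Finset ℕ) + {c} = {a + c, a + c + 1} := by
  ext x; simp [Finset.mem_add]; omega

lemma pairEq {a b : ℕ} (h : ({a, a + 1} : Finset ℕ) = {b, b + 1}) : a = b := by
  have ha : a ∈ ({b, b + 1} : Finset ℕ) := by rw [← h]; simp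
  have hb : b ∈ ({a, a + 1} : Finset ℕ) := by rw [h]; simp
  simp at ha hb; omega

lemma ne5 {j k : ℕ} (hj : 2 ≤ j) : 5 * 4 ^ k ≠ 4 ^ j + 1 := by
  have h1 : (4 : ℕ) ∣ 4 ^ j := dvd_pow_self 4 (by omega)
  cases k with
  | zero =>
    have h16 : (16 : ℕ) ≤ 4 ^ j := by
      calc (16 : ℕ) = 4 ^ 2 := by norm_num
        _ ≤ 4 ^ j := Nat.pow_le_pow_right (by norm_num) hj
    simp only [pow_zero, mul_one]
    omega
  | succ k =>
    have h2 : (4 : ℕ) ∣ 5 * 4 ^ (k + 1) := ⟨5 * 4 ^ k, by ring⟩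
    omega

variable {m : ℕ}

lemma adj_succ (u : Fin (m + 3)) : (cycleGraph (m + 3)).Adj u (u + 1) := by
  have h : (u + 1) - u = (1 : Fin (m + 3)) := add_sub_cancel_left u 1
  exact (cycleGraph_adj (n := m + 1)).mpr (Or.inr h)

lemma edge_char {e : Sym2 (Fin (m + 3))} (he : e ∈ (cycleGraph (m + 3)).edgeSet) :
    ∃ u, e = s(u, u + 1) := by
  induction e with
  | h u v =>
    rw [SimpleGraph.mem_edgeSet] at he
    rcases (cycleGraph_adj (n := m + 1)).mp he with h | h
    · refine ⟨v, ?_⟩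
      have h' : u = v + 1 := by rw [sub_eq_iff_eq_add] at h; rw [h]; exact add_comm 1 v
      rw [h']
      exact Sym2.eq_swap
    · refine ⟨u, ?_⟩
      have h' : v = u + 1 := by rw [sub_eq_iff_eq_add] at h; rw [h]; exact add_comm 1 u
      rw [h']

lemma val_succ (u : Fin (m + 3)) :
    ((u + 1 : Fin (m + 3)) : ℕ) = if u.val = m + 2 then 0 else u.val + 1 := by
  rw [Fin.val_add_one]
  by_cases h : u.val = m + 2 <;> simp [Fin.ext_iff, Fin.val_last, h]

lemma label_eq (u : Fin (m + 3)) :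
    edgeLabel (F (m + 3)) s(u, u + 1) =
      if u.val = m + 2 then
        (if (m + 2) % 2 = 0 then ({4 ^ (m + 2) + 1} : Finset ℕ)
          else {4 ^ (m + 2) + 1, 4 ^ (m + 2) + 2})
      else {5 * 4 ^ u.val, 5 * 4 ^ u.val + 1} := by
  have hL : edgeLabel (F (m + 3)) s(u, u + 1) = F (m + 3) u + F (m + 3) (u + 1) := rfl
  by_cases h : (u : ℕ) = m + 2
  · have hv : ((u + 1 : Fin (m + 3)) : ℕ) = 0 := by rw [val_succ, if_pos h]
    by_cases hp : (m + 2) % 2 = 0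
    · rw [hL, if_pos h, if_pos hp]
      unfold F
      rw [hv, h, if_pos hp, if_pos (show 0 % 2 = 0 by norm_num), ss]
      norm_num
    · rw [hL, if_pos h, if_neg hp]
      unfold F
      rw [hv, h, if_neg hp, if_pos (show 0 % 2 = 0 by norm_num), ps]
      norm_num
  · have hv : ((u + 1 : Fin (m + 3)) : ℕ) = (u : ℕ) + 1 := by rw [val_succ, if_neg h]
    rw [hL, if_neg h]
    have key : 4 ^ ((u : ℕ)) + 4 ^ ((u : ℕ) + 1) = 5 * 4 ^ (u : ℕ) := by rw [pow_succ]; ring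
    by_cases hp : (u : ℕ) % 2 = 0
    · unfold F
      rw [hv, if_pos hp, if_neg (by omega), sp, key]
    · unfold F
      rw [hv, if_neg hp, if_pos (by omega), ps, key]

lemma weak_aux (u : Fin (m + 3)) :
    (F (m + 3) u + F (m + 3) (u + 1)).card
      = max (F (m + 3) u).card (F (m + 3) (u + 1)).card := by
  have hL : F (m + 3) u + F (m + 3) (u + 1) = edgeLabel (F (m + 3)) s(u, u + 1) := rfl
  rw [hL, label_eq, F_card, F_card]
  by_cases h : (u : ℕ) = m + 2
  · have hv : ((u + 1 : Fin (m + 3)) : ℕ) = 0 := by rw [val_succ, if_pos h]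
    rw [if_pos h, hv, h]
    by_cases hp : (m + 2) % 2 = 0
    · rw [if_pos hp, if_pos hp, if_pos (show 0 % 2 = 0 by norm_num), Finset.card_singleton]
      omega
    · rw [if_neg hp, if_neg hp, if_pos (show 0 % 2 = 0 by norm_num),
        Finset.card_pair (by omega)]
      omega
  · have hv : ((u + 1 : Fin (m + 3)) : ℕ) = (u : ℕ) + 1 := by rw [val_succ, if_neg h]
    rw [if_neg h, hv, card_pair']
    split_ifs <;> omega

lemma F_weak : IsWeakIASI (cycleGraph (m + 3)) (F (m + 3)) := by
  refine ⟨⟨F_nonempty _, F_inj _, ?_⟩, ?_⟩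
  · intro e1 he1 e2 he2 hEq
    obtain ⟨u, rfl⟩ := edge_char he1
    obtain ⟨v, rfl⟩ := edge_char he2
    rw [label_eq, label_eq] at hEq
    by_cases hu : (u : ℕ) = m + 2 <;> by_cases hv : (v : ℕ) = m + 2
    · have : u = v := Fin.val_injective (by omega)
      rw [this]
    · exfalso
      rw [if_pos hu, if_neg hv] at hEq
      by_cases hp : (m + 2) % 2 = 0
      · rw [if_pos hp] at hEq
        have hc := congrArg Finset.card hEq
        rw [Finset.card_singleton, card_pair'] at hc
        omega
      · rw [if_neg hp] at hEq
        have hEq' : ({4 ^ (m + 2) + 1, (4 ^ (m + 2) + 1) + 1} : Finset ℕ)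
            = {5 * 4 ^ (v : ℕ), 5 * 4 ^ (v : ℕ) + 1} := by
          rw [show 4 ^ (m + 2) + 1 + 1 = 4 ^ (m + 2) + 2 by omega]; exact hEq
        exact ne5 (by omega) (pairEq hEq').symm
    · exfalso
      rw [if_neg hu, if_pos hv] at hEq
      by_cases hp : (m + 2) % 2 = 0
      · rw [if_pos hp] at hEq
        have hc := congrArg Finset.card hEq
        rw [Finset.card_singleton, card_pair'] at hc
        omega
      · rw [if_neg hp] at hEq
        have hEq' : ({4 ^ (m + 2) + 1, (4 ^ (m + 2) + 1) + 1} : Finset ℕ)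
            = {5 * 4 ^ (u : ℕ), 5 * 4 ^ (u : ℕ) + 1} := by
          rw [show 4 ^ (m + 2) + 1 + 1 = 4 ^ (m + 2) + 2 by omega]; exact hEq.symm
        exact ne5 (by omega) (pairEq hEq').symm
    · rw [if_neg hu, if_neg hv] at hEq
      have h5 := pairEq hEq
      have h4 : (4 : ℕ) ^ (u : ℕ) = 4 ^ (v : ℕ) := by omega
      have hval : (u : ℕ) = (v : ℕ) := pow4_inj h4
      have : u = v := Fin.val_injective hval
      rw [this]
  · intro u v huv
    rcases (cycleGraph_adj (n := m + 1)).mp huv with h | h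
    · have h' : u = v + 1 := by rw [sub_eq_iff_eq_add] at h; rw [h]; exact add_comm 1 v
      subst h'
      rw [add_comm (F _ (v + 1)) (F _ v), max_comm]
      exact weak_aux v
    · have h' : v = u + 1 := by rw [sub_eq_iff_eq_add] at h; rw [h]; exact add_comm 1 u
      subst h'
      exact weak_aux u

lemma mono_even (hpar : (m + 2) % 2 = 1) :
    monoEdgeCount (cycleGraph (m + 3)) (F (m + 3)) = 0 := by
  unfold monoEdgeCount
  rw [Set.ncard_eq_zero (Set.toFinite _)]
  ext e
  simp only [Set.mem_setOf_eq, Set.mem_empty_iff_false, iff_false, not_and]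
  intro he
  obtain ⟨u, rfl⟩ := edge_char he
  rw [label_eq]
  by_cases h1 : (u : ℕ) = m + 2
  · rw [if_pos h1, if_neg (by omega : ¬ (m + 2) % 2 = 0), Finset.card_pair (by omega)]
    omega
  · rw [if_neg h1, card_pair']
    omega

lemma mono_odd (hpar : (m + 2) % 2 = 0) :
    monoEdgeCount (cycleGraph (m + 3)) (F (m + 3)) = 1 := by
  unfold monoEdgeCount
  have hset : {e ∈ (cycleGraph (m + 3)).edgeSet | (edgeLabel (F (m + 3)) e).card = 1}
      = {s((⟨m + 2, by omega⟩ : Fin (m + 3)), (⟨m + 2, by omega⟩ : Fin (m + 3)) + 1)} := by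
    ext e
    simp only [Set.mem_setOf_eq, Set.mem_singleton_iff]
    constructor
    · rintro ⟨he, hc⟩
      obtain ⟨u, rfl⟩ := edge_char he
      rw [label_eq] at hc
      by_cases h1 : (u : ℕ) = m + 2
      · have hu : u = (⟨m + 2, by omega⟩ : Fin (m + 3)) := Fin.val_injective h1
        rw [hu]
      · rw [if_neg h1, card_pair'] at hc
        omega
    · rintro rfl
      refine ⟨(SimpleGraph.mem_edgeSet _).mpr (adj_succ _), ?_⟩
      rw [label_eq, if_pos rfl, if_pos hpar, Finset.card_singleton]
  rw [hset, Set.ncard_singleton]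

open Fin.NatCast in
lemma odd_lower (hpar : (m + 2) % 2 = 0) (f : Fin (m + 3) → Finset ℕ)
    (hf : IsWeakIASI (cycleGraph (m + 3)) f) :
    monoEdgeCount (cycleGraph (m + 3)) f ≠ 0 := by
  intro h0
  unfold monoEdgeCount at h0
  rw [Set.ncard_eq_zero (Set.toFinite _)] at h0
  have key : ∀ u v : Fin (m + 3), (cycleGraph (m + 3)).Adj u v →
      ((f u).card = 1 ↔ ¬ (f v).card = 1) := by
    intro u v huv
    have hcd : (f u).card + (f v).card - 1 ≤ (f u + f v).card :=
      cauchy_davenport_add_of_linearOrder_isCancelAdd (hf.nonempty u) (hf.nonempty v)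
    have hw := hf.weak huv
    have hu1 : 1 ≤ (f u).card := Finset.card_pos.mpr (hf.nonempty u)
    have hv1 : 1 ≤ (f v).card := Finset.card_pos.mpr (hf.nonempty v)
    have hne : ¬((f u).card = 1 ∧ (f v).card = 1) := by
      rintro ⟨ha, hb⟩
      have hcard : (edgeLabel f s(u, v)).card = 1 := by
        have hrfl : edgeLabel f s(u, v) = f u + f v := rfl
        rw [hrfl, hw, ha, hb]
        omega
      have hmem : s(u, v) ∈
          {e ∈ (cycleGraph (m + 3)).edgeSet | (edgeLabel f e).card = 1} :=
        ⟨(SimpleGraph.mem_edgeSet _).mpr huv, hcard⟩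
      rw [h0] at hmem
      exact hmem
    omega
  have step : ∀ i : ℕ,
      ((f ((i : Fin (m + 3)))).card = 1 ↔ (Even i ↔ (f (0 : Fin (m + 3))).card = 1)) := by
    intro i
    induction i with
    | zero => simp
    | succ i ih =>
      have h1 := key _ _ (adj_succ (i : Fin (m + 3)))
      have hcast : ((i + 1 : ℕ) : Fin (m + 3)) = (i : Fin (m + 3)) + 1 := by push_cast; ring
      rw [hcast]
      have h2 := Nat.even_add_one (n := i)
      tauto
  have hfin := step (m + 3)
  rw [Fin.natCast_self] at hfin
  have hne : ¬ Even (m + 3) := by rw [Nat.even_iff]; omega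
  tauto

end CycleSparing

/-- For `n ≥ 3`, the sparing number of the cycle `C n` is `0` if `n` is even
and `1` if `n` is odd. -/
theorem cycle_sparingNumber (n : ℕ) (hn : 3 ≤ n) :
    (Even n → sparingNumber (SimpleGraph.cycleGraph n) = 0) ∧
    (Odd n → sparingNumber (SimpleGraph.cycleGraph n) = 1) := by
  obtain ⟨m, rfl⟩ : ∃ m, n = m + 3 := ⟨n - 3, by omega⟩
  constructor
  · intro hev
    have hpar : (m + 2) % 2 = 1 := by rw [Nat.even_iff] at hev; omega
    exact Nat.sInf_eq_zero.mpr
      (Or.inl ⟨CycleSparing.F (m + 3), CycleSparing.F_weak, CycleSparing.mono_even hpar⟩)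
  · intro hodd
    have hpar : (m + 2) % 2 = 0 := by rw [Nat.odd_iff] at hodd; omega
    have h1 : 1 ∈ {k | ∃ f : Fin (m + 3) → Finset ℕ,
        IsWeakIASI (SimpleGraph.cycleGraph (m + 3)) f ∧
          monoEdgeCount (SimpleGraph.cycleGraph (m + 3)) f = k} :=
      ⟨CycleSparing.F (m + 3), CycleSparing.F_weak, CycleSparing.mono_odd hpar⟩
    have hle := Nat.sInf_le h1
    obtain ⟨f, hf, hc⟩ := Nat.sInf_mem (s := {k | ∃ f : Fin (m + 3) → Finset ℕ,
        IsWeakIASI (SimpleGraph.cycleGraph (m + 3)) f ∧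
          monoEdgeCount (SimpleGraph.cycleGraph (m + 3)) f = k}) ⟨1, h1⟩
    have hne := CycleSparing.odd_lower hpar f hf
    unfold sparingNumber
    omega
end

section
/- Let G₁, G₂, …, G_k be simple graphs on pairwise disjoint vertex sets, each without isolated vertices, and let f be an IASI of the join G₁ + G₂ + ⋯ + G_k. Then f is a weak IASI of the join if and only if the restriction of f to each G_i is a weak IASI and at most one of the graphs G_i contains a vertex whose set-label is not a singleton (i.e., all the G_i except possibly one are labeled 1-uniformly by f). -/
open Pointwise

/-- The join `G₀ + G₁ + ⋯ + G_{k-1}` of a family of graphs on pairwise disjoint vertex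
sets. The disjoint vertex sets are encoded by a partition map `p : V → Fin k`, the graph
`G i` living on the part `p ⁻¹' {i}`; two vertices are adjacent in the join iff they lie
in different parts, or they are adjacent in one of the `G i`. -/
def joinFamily {V : Type*} {k : ℕ} (p : V → Fin k) (G : Fin k → SimpleGraph V) :
    SimpleGraph V where
  Adj u v := p u ≠ p v ∨ ∃ i, (G i).Adj u v
  symm := by
    constructor
    intro u v h
    rcases h with h | ⟨i, h⟩
    · exact Or.inl h.symm
    · exact Or.inr ⟨i, h.symm⟩
  loopless := by
    constructor
    intro v h
    rcases h with h | ⟨i, h⟩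
    · exact h rfl
    · exact (G i).irrefl h

lemma sum_card_key {A B : Finset ℕ} (hA : A.Nonempty) (hB : B.Nonempty) :
    (A + B).card = max A.card B.card ↔ A.card = 1 ∨ B.card = 1 := by
  have hA1 : 1 ≤ A.card := hA.card_pos
  have hB1 : 1 ≤ B.card := hB.card_pos
  constructor
  · intro h
    by_contra hc
    push_neg at hc
    have hcd : A.card + B.card - 1 ≤ (A + B).card :=
      cauchy_davenport_add_of_linearOrder_isCancelAdd hA hB
    have hm : max A.card B.card ≤ A.card + B.card - 2 :=
      max_le (by omega) (by omega)
    omega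
  · rintro (h | h)
    · obtain ⟨a, rfl⟩ := Finset.card_eq_one.mp h
      rw [Finset.card_singleton_add]
      simp [max_eq_right hB1]
    · obtain ⟨b, rfl⟩ := Finset.card_eq_one.mp h
      rw [Finset.card_add_singleton]
      simp [max_eq_left hA1]

/-- Let `G₀, …, G_{k-1}` be graphs on pairwise disjoint vertex sets (each `G i` having
its edges inside its own part `p ⁻¹' {i}`), each without isolated vertices, and let `f`
be an IASI of their join. Then `f` is a weak IASI of the join if and only if the
restriction of `f` to each `G i` is a weak IASI and at most one of the graphs contains
a vertex whose set-label is not a singleton. -/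
theorem isWeakIASI_joinFamily_iff {V : Type*} {k : ℕ} (p : V → Fin k)
    (G : Fin k → SimpleGraph V)
    (hpart : ∀ i, ∀ ⦃u v : V⦄, (G i).Adj u v → p u = i ∧ p v = i)
    (hiso : ∀ v : V, ∃ u, (G (p v)).Adj v u)
    (f : V → Finset ℕ) (hf : IsIASI (joinFamily p G) f) :
    IsWeakIASI (joinFamily p G) f ↔
      (∀ i, IsWeakIASI (G i) f) ∧
        {i : Fin k | ∃ v, p v = i ∧ (f v).card ≠ 1}.Subsingleton := by
  have key : ∀ u v : V, (f u + f v).card = max (f u).card (f v).card ↔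
      (f u).card = 1 ∨ (f v).card = 1 :=
    fun u v => sum_card_key (hf.nonempty u) (hf.nonempty v)
  constructor
  · intro hw
    refine ⟨fun i => ?_, ?_⟩
    · have hle : G i ≤ joinFamily p G := fun u v h => Or.inr ⟨i, h⟩
      exact { nonempty := hf.nonempty, inj := hf.inj,
              edgeInj := hf.edgeInj.mono (SimpleGraph.edgeSet_mono hle),
              weak := fun u v h => hw.weak (hle h) }
    · rintro i ⟨u, hu, hcu⟩ j ⟨v, hv, hcv⟩
      by_contra hij
      have hadj : (joinFamily p G).Adj u v := Or.inl (by rw [hu, hv]; exact hij)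
      rcases (key u v).mp (hw.weak hadj) with h | h
      · exact hcu h
      · exact hcv h
  · rintro ⟨hweak, hsub⟩
    refine { nonempty := hf.nonempty, inj := hf.inj, edgeInj := hf.edgeInj, weak := ?_ }
    intro u v hadj
    rcases hadj with hne | ⟨i, hi⟩
    · refine (key u v).mpr ?_
      by_contra hc
      push_neg at hc
      exact hne (hsub ⟨u, rfl, hc.1⟩ ⟨v, rfl, hc.2⟩)
    · exact (hweak i).weak hi
end

section
/- For integers m, n > 1, the sparing number of the (m,n)-fan graph F_{m,n} = P_n + K̄_m is φ(F_{m,n}) = n, where P_n denotes the path of length n (with n edges). -/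
open Pointwise

/-- The join `G + H` of two graphs on disjoint vertex sets: all vertices and edges of
`G` and `H`, together with every edge joining a vertex of `G` to a vertex of `H`. -/
def graphJoin {V W : Type*} (G : SimpleGraph V) (H : SimpleGraph W) :
    SimpleGraph (V ⊕ W) where
  Adj x y :=
    match x, y with
    | Sum.inl a, Sum.inl b => G.Adj a b
    | Sum.inr a, Sum.inr b => H.Adj a b
    | Sum.inl _, Sum.inr _ => True
    | Sum.inr _, Sum.inl _ => True
  symm := by
    constructor
    rintro (a | a) (b | b) h
    · exact G.adj_symm h
    · trivial
    · trivial
    · exact H.adj_symm h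
  loopless := by
    constructor
    rintro (a | a) h
    · exact G.irrefl h
    · exact H.irrefl h

section aux
open Finset

lemma weak_singleton {A B : Finset ℕ} (hA : A.Nonempty) (hB : B.Nonempty)
    (h : (A + B).card = max A.card B.card) : A.card = 1 ∨ B.card = 1 := by
  by_contra hc
  push_neg at hc
  have h1 := hA.card_pos
  have h2 := hB.card_pos
  have h3 := cauchy_davenport_add_of_linearOrder_isCancelAdd hA hB
  omega

lemma mono_iff {A B : Finset ℕ} (hA : A.Nonempty) (hB : B.Nonempty) :
    (A + B).card = 1 ↔ A.card = 1 ∧ B.card = 1 := by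
  constructor
  · intro h
    have h1 := card_le_card_add_right (s := A) hB
    have h2 := card_le_card_add_left (t := B) hA
    have h3 := hA.card_pos
    have h4 := hB.card_pos
    omega
  · rintro ⟨hA1, hB1⟩
    obtain ⟨a, rfl⟩ := card_eq_one.mp hA1
    obtain ⟨b, rfl⟩ := card_eq_one.mp hB1
    simp [singleton_add_singleton]

lemma le_ncard_of_inj {α : Type*} {s : Set α} (hs : s.Finite) {k : ℕ} {g : Fin k → α}
    (hg : Function.Injective g) (hmem : ∀ i, g i ∈ s) : k ≤ s.ncard := by
  have h1 : (Set.range g).ncard = k := by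
    rw [← Nat.card_coe_set_eq, Nat.card_range_of_injective hg, Nat.card_eq_fintype_card,
      Fintype.card_fin]
  rw [← h1]
  exact Set.ncard_le_ncard (Set.range_subset_iff.mpr hmem) hs

end aux

lemma edgeLabel_mk {V : Type*} (f : V → Finset ℕ) (u v : V) :
    edgeLabel f s(u, v) = f u + f v := rfl

lemma singleton_add_pair (x a : ℕ) :
    ({x} : Finset ℕ) + {a, a + 1} = {x + a, x + a + 1} := by
  ext y
  simp [Finset.mem_add]
  omega

lemma mod_key {K a a' b b' : ℕ} (ha : a < K) (ha' : a' < K)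
    (h : a + K * (b + 1) = a' + K * (b' + 1)) : a = a' ∧ b = b' := by
  have h0 : 0 < K := lt_of_le_of_lt (Nat.zero_le _) ha
  have e1 : a = a' := by
    have := congrArg (· % K) h
    simpa [Nat.add_mul_mod_self_left, Nat.mod_eq_of_lt ha, Nat.mod_eq_of_lt ha'] using this
  subst e1
  refine ⟨rfl, ?_⟩
  have : b + 1 = b' + 1 := Nat.eq_of_mul_eq_mul_left h0 (by omega)
  omega

/-- The optimal weak IASI on the fan graph. -/
def fanLabel (m n : ℕ) : Fin (n + 1) ⊕ Fin m → Finset ℕ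
  | Sum.inl i => {i.val}
  | Sum.inr j => {(n + 2) * (j.val + 1), (n + 2) * (j.val + 1) + 1}

lemma fanLabel_inl (m n : ℕ) (i : Fin (n+1)) : fanLabel m n (Sum.inl i) = {i.val} := rfl
lemma fanLabel_inr (m n : ℕ) (j : Fin m) :
    fanLabel m n (Sum.inr j) = {(n + 2) * (j.val + 1), (n + 2) * (j.val + 1) + 1} := rfl

lemma fanLabel_card_inl (m n : ℕ) (i : Fin (n+1)) : (fanLabel m n (Sum.inl i)).card = 1 :=
  Finset.card_singleton _

lemma fanLabel_card_inr (m n : ℕ) (j : Fin m) : (fanLabel m n (Sum.inr j)).card = 2 :=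
  Finset.card_pair (by omega)

lemma fanLabel_nonempty (m n : ℕ) (v : Fin (n+1) ⊕ Fin m) : (fanLabel m n v).Nonempty := by
  rcases v with i | j
  · exact ⟨i.val, by simp [fanLabel_inl]⟩
  · exact ⟨(n + 2) * (j.val + 1), by simp [fanLabel_inr]⟩

lemma fanLabel_inj (m n : ℕ) : Function.Injective (fanLabel m n) := by
  rintro (i | j) (i' | j') h
  · simp only [fanLabel_inl, Finset.singleton_inj] at h
    exact congrArg Sum.inl (Fin.ext h)
  · exact absurd (congrArg Finset.card h) (by rw [fanLabel_card_inl, fanLabel_card_inr]; omega)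
  · exact absurd (congrArg Finset.card h) (by rw [fanLabel_card_inl, fanLabel_card_inr]; omega)
  · simp only [fanLabel_inr] at h
    have h1 : (n + 2) * (j.val + 1) ∈ ({(n + 2) * (j'.val + 1), (n + 2) * (j'.val + 1) + 1} : Finset ℕ) := by
      rw [← h]; simp
    have h2 : (n + 2) * (j'.val + 1) ∈ ({(n + 2) * (j.val + 1), (n + 2) * (j.val + 1) + 1} : Finset ℕ) := by
      rw [h]; simp
    simp only [Finset.mem_insert, Finset.mem_singleton] at h1 h2
    have : (n + 2) * (j.val + 1) = (n + 2) * (j'.val + 1) := by omega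
    have := Nat.eq_of_mul_eq_mul_left (by omega : 0 < n + 2) this
    exact congrArg Sum.inr (Fin.ext (by omega))

/-- The fan graph. -/
abbrev FanG (m n : ℕ) : SimpleGraph (Fin (n + 1) ⊕ Fin m) :=
  graphJoin (SimpleGraph.pathGraph (n + 1)) (⊥ : SimpleGraph (Fin m))

lemma fan_adj_ll {m n : ℕ} {a b : Fin (n+1)} :
    (FanG m n).Adj (Sum.inl a) (Sum.inl b) ↔ a.val + 1 = b.val ∨ b.val + 1 = a.val :=
  SimpleGraph.pathGraph_adj

lemma fan_adj_lr {m n : ℕ} (a : Fin (n+1)) (b : Fin m) :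
    (FanG m n).Adj (Sum.inl a) (Sum.inr b) := trivial

lemma fan_adj_rl {m n : ℕ} (a : Fin m) (b : Fin (n+1)) :
    (FanG m n).Adj (Sum.inr a) (Sum.inl b) := trivial

lemma fan_not_adj_rr {m n : ℕ} (a b : Fin m) : ¬ (FanG m n).Adj (Sum.inr a) (Sum.inr b) :=
  fun h => h

lemma fanLabel_cross (m n : ℕ) (a : Fin (n+1)) (b : Fin m) :
    fanLabel m n (Sum.inl a) + fanLabel m n (Sum.inr b) =
      {a.val + (n + 2) * (b.val + 1), a.val + (n + 2) * (b.val + 1) + 1} := by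
  rw [fanLabel_inl, fanLabel_inr, singleton_add_pair]

lemma fanLabel_cross' (m n : ℕ) (a : Fin m) (b : Fin (n+1)) :
    fanLabel m n (Sum.inr a) + fanLabel m n (Sum.inl b) =
      {b.val + (n + 2) * (a.val + 1), b.val + (n + 2) * (a.val + 1) + 1} := by
  rw [add_comm, fanLabel_cross]

lemma fanLabel_path (m n : ℕ) (a b : Fin (n+1)) :
    fanLabel m n (Sum.inl a) + fanLabel m n (Sum.inl b) = {a.val + b.val} := by
  rw [fanLabel_inl, fanLabel_inl, Finset.singleton_add_singleton]

lemma pair_succ_inj {x y : ℕ} (h : ({x, x+1} : Finset ℕ) = {y, y+1}) : x = y := by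
  have h1 : x ∈ ({y, y+1} : Finset ℕ) := h ▸ (by simp)
  have h2 : y ∈ ({x, x+1} : Finset ℕ) := h.symm ▸ (by simp)
  simp only [Finset.mem_insert, Finset.mem_singleton] at h1 h2
  omega

lemma singleton_ne_pair (x y z : ℕ) (h : y ≠ z) : ({x} : Finset ℕ) ≠ {y, z} := by
  intro heq
  have := congrArg Finset.card heq
  rw [Finset.card_singleton, Finset.card_pair h] at this
  omega

lemma fan_cross_cross {m n : ℕ} {a a' : Fin (n+1)} {b b' : Fin m}
    (h : a.val + (n + 2) * (b.val + 1) = a'.val + (n + 2) * (b'.val + 1)) :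
    a = a' ∧ b = b' := by
  obtain ⟨h1, h2⟩ := mod_key (K := n + 2) (by omega) (by omega) h
  exact ⟨Fin.ext h1, Fin.ext h2⟩

lemma fan_weak (m n : ℕ) : IsWeakIASI (FanG m n) (fanLabel m n) := by
  refine ⟨⟨fanLabel_nonempty m n, fanLabel_inj m n, ?_⟩, ?_⟩
  · -- edgeInj
    intro e1 he1 e2 he2 hlab
    induction e1 using Sym2.ind with | _ u v => ?_
    induction e2 using Sym2.ind with | _ w x => ?_
    rw [SimpleGraph.mem_edgeSet] at he1 he2
    rw [edgeLabel_mk, edgeLabel_mk] at hlab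
    rcases u with a | a <;> rcases v with b | b <;>
      rcases w with a' | a' <;> rcases x with b' | b'
    · -- LL LL
      rw [fanLabel_path, fanLabel_path, Finset.singleton_inj] at hlab
      rw [fan_adj_ll] at he1 he2
      rw [Sym2.eq_iff]
      have : (a.val = a'.val ∧ b.val = b'.val) ∨ (a.val = b'.val ∧ b.val = a'.val) := by omega
      rcases this with ⟨h1, h2⟩ | ⟨h1, h2⟩
      · exact Or.inl ⟨congrArg Sum.inl (Fin.ext h1), congrArg Sum.inl (Fin.ext h2)⟩
      · exact Or.inr ⟨congrArg Sum.inl (Fin.ext h1), congrArg Sum.inl (Fin.ext h2)⟩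
    · rw [fanLabel_path, fanLabel_cross] at hlab
      exact absurd hlab (singleton_ne_pair _ _ _ (by omega))
    · rw [fanLabel_path, fanLabel_cross'] at hlab
      exact absurd hlab (singleton_ne_pair _ _ _ (by omega))
    · exact absurd he2 (fan_not_adj_rr _ _)
    · rw [fanLabel_cross, fanLabel_path] at hlab
      exact absurd hlab.symm (singleton_ne_pair _ _ _ (by omega))
    · rw [fanLabel_cross, fanLabel_cross] at hlab
      obtain ⟨h1, h2⟩ := fan_cross_cross (pair_succ_inj hlab)
      rw [h1, h2]
    · rw [fanLabel_cross, fanLabel_cross'] at hlab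
      obtain ⟨h1, h2⟩ := fan_cross_cross (pair_succ_inj hlab)
      rw [h1, h2, Sym2.eq_swap]
    · exact absurd he2 (fan_not_adj_rr _ _)
    · rw [fanLabel_cross', fanLabel_path] at hlab
      exact absurd hlab.symm (singleton_ne_pair _ _ _ (by omega))
    · rw [fanLabel_cross', fanLabel_cross] at hlab
      obtain ⟨h1, h2⟩ := fan_cross_cross (pair_succ_inj hlab)
      rw [h1, h2, Sym2.eq_swap]
    · rw [fanLabel_cross', fanLabel_cross'] at hlab
      obtain ⟨h1, h2⟩ := fan_cross_cross (pair_succ_inj hlab)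
      rw [h1, h2]
    · exact absurd he2 (fan_not_adj_rr _ _)
    all_goals exact absurd he1 (fan_not_adj_rr _ _)
  · -- weak
    rintro (a | a) (b | b) h
    · rw [fanLabel_path, fanLabel_card_inl, fanLabel_card_inl, Finset.card_singleton]; omega
    · rw [fanLabel_cross, fanLabel_card_inl, fanLabel_card_inr, Finset.card_pair (by omega)]; omega
    · rw [fanLabel_cross', fanLabel_card_inl, fanLabel_card_inr, Finset.card_pair (by omega)]; omega
    · exact absurd h (fan_not_adj_rr _ _)

/-- The `i`-th path edge. -/
def pathEdge (m n : ℕ) (i : Fin n) : Sym2 (Fin (n + 1) ⊕ Fin m) :=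
  s(Sum.inl i.castSucc, Sum.inl i.succ)

lemma pathEdge_inj (m n : ℕ) : Function.Injective (pathEdge m n) := by
  intro i i' h
  rw [pathEdge, pathEdge, Sym2.eq_iff] at h
  have hc : ∀ k : Fin n, (k.castSucc).val = k.val := fun _ => rfl
  have hs : ∀ k : Fin n, (k.succ).val = k.val + 1 := fun _ => rfl
  rcases h with ⟨h1, h2⟩ | ⟨h1, h2⟩ <;>
    · have e1 := congrArg (fun x => match x with | Sum.inl a => a.val | Sum.inr _ => 0) h1
      have e2 := congrArg (fun x => match x with | Sum.inl a => a.val | Sum.inr _ => 0) h2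
      simp only [hc, hs] at e1 e2
      exact Fin.ext (by omega)

lemma pathEdge_mem (m n : ℕ) (i : Fin n) : pathEdge m n i ∈ (FanG m n).edgeSet := by
  rw [pathEdge, SimpleGraph.mem_edgeSet, fan_adj_ll]
  left
  simp [Fin.val_succ]

lemma fan_monoCount (m n : ℕ) : monoEdgeCount (FanG m n) (fanLabel m n) = n := by
  have hset : {e ∈ (FanG m n).edgeSet | (edgeLabel (fanLabel m n) e).card = 1} =
      Set.range (pathEdge m n) := by
    ext e
    induction e using Sym2.ind with | _ u v => ?_
    simp only [Set.mem_setOf_eq, SimpleGraph.mem_edgeSet, Set.mem_range]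
    constructor
    · rintro ⟨he, hcard⟩
      rcases u with a | a <;> rcases v with b | b
      · rw [fan_adj_ll] at he
        rcases he with h | h
        · have hb : a.val < n := by omega
          refine ⟨⟨a.val, hb⟩, ?_⟩
          rw [pathEdge, Sym2.eq_iff]
          exact Or.inl ⟨congrArg Sum.inl (Fin.ext rfl),
            congrArg Sum.inl (Fin.ext (by simp only [Fin.val_succ]; omega))⟩
        · have hb : b.val < n := by omega
          refine ⟨⟨b.val, hb⟩, ?_⟩
          rw [pathEdge, Sym2.eq_iff]
          exact Or.inr ⟨congrArg Sum.inl (Fin.ext rfl),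
            congrArg Sum.inl (Fin.ext (by simp only [Fin.val_succ]; omega))⟩
      · rw [edgeLabel_mk, fanLabel_cross, Finset.card_pair (by omega)] at hcard
        omega
      · rw [edgeLabel_mk, fanLabel_cross', Finset.card_pair (by omega)] at hcard
        omega
      · exact absurd he (fan_not_adj_rr _ _)
    · rintro ⟨i, h⟩
      constructor
      · rw [← SimpleGraph.mem_edgeSet, ← h]
        exact pathEdge_mem m n i
      · rw [← h, pathEdge, edgeLabel_mk, fanLabel_path]
        exact Finset.card_singleton _
  rw [monoEdgeCount, hset, ← Nat.card_coe_set_eq,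
    Nat.card_range_of_injective (pathEdge_inj m n), Nat.card_eq_fintype_card, Fintype.card_fin]

lemma fan_lower (m n : ℕ) (hm : 1 < m) (hn : 1 < n) (f : Fin (n + 1) ⊕ Fin m → Finset ℕ)
    (hf : IsWeakIASI (FanG m n) f) : n ≤ monoEdgeCount (FanG m n) f := by
  have hfin : {e ∈ (FanG m n).edgeSet | (edgeLabel f e).card = 1}.Finite := Set.toFinite _
  have hsing : ∀ u v, (FanG m n).Adj u v → (f u).card = 1 ∨ (f v).card = 1 :=
    fun u v h => weak_singleton (hf.nonempty u) (hf.nonempty v) (hf.weak h)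
  by_cases hall : ∀ j : Fin m, (f (Sum.inr j)).card = 1
  · -- all outer vertices mono; pick a mono endpoint of each path edge
    have hend : ∀ i : Fin n, ∃ u : Fin (n + 1),
        (u.val = i.val ∨ u.val = i.val + 1) ∧ (f (Sum.inl u)).card = 1 := by
      intro i
      have hadj : (FanG m n).Adj (Sum.inl i.castSucc) (Sum.inl i.succ) := by
        rw [fan_adj_ll]; left; simp [Fin.val_succ]
      rcases hsing _ _ hadj with h | h
      · exact ⟨i.castSucc, Or.inl rfl, h⟩
      · exact ⟨i.succ, Or.inr rfl, h⟩
    choose u hu hucard using hend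
    refine le_ncard_of_inj hfin (g := fun i : Fin n =>
      s(Sum.inl (u i), Sum.inr (⟨i.val % 2, by omega⟩ : Fin m))) ?_ ?_
    · intro i i' h
      rw [Sym2.eq_iff] at h
      rcases h with ⟨h1, h2⟩ | ⟨h1, h2⟩
      · have e1 : (u i).val = (u i').val := by
          injection h1 with h1'; exact congrArg Fin.val h1'
        have e2 : i.val % 2 = i'.val % 2 := by
          injection h2 with h2'; exact congrArg Fin.val h2'
        have := hu i
        have := hu i'
        exact Fin.ext (by omega)
      · exact absurd h1 (by simp)
    · intro i
      refine ⟨(FanG m n).mem_edgeSet.mpr (fan_adj_lr _ _), ?_⟩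
      rw [edgeLabel_mk]
      exact (mono_iff (hf.nonempty _) (hf.nonempty _)).mpr ⟨hucard i, hall _⟩
  · -- some outer vertex not mono; then all path vertices are mono
    push_neg at hall
    obtain ⟨j0, hj0⟩ := hall
    have hpath : ∀ i : Fin (n + 1), (f (Sum.inl i)).card = 1 := by
      intro i
      rcases hsing (Sum.inl i) (Sum.inr j0) (fan_adj_lr _ _) with h | h
      · exact h
      · exact absurd h hj0
    refine le_ncard_of_inj hfin (g := pathEdge m n) (pathEdge_inj m n) ?_
    intro i
    refine ⟨pathEdge_mem m n i, ?_⟩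
    rw [pathEdge, edgeLabel_mk]
    exact (mono_iff (hf.nonempty _) (hf.nonempty _)).mpr ⟨hpath _, hpath _⟩

/-- For integers `m, n > 1`, the sparing number of the `(m,n)`-fan graph
`F_{m,n} = P_n + K̄_m` is `n`. Here `P_n`, the path of length `n` (with `n` edges and
`n+1` vertices), is `SimpleGraph.pathGraph (n+1)`, and `K̄_m` is the edgeless graph on
`m` vertices. -/
theorem fan_sparingNumber (m n : ℕ) (hm : 1 < m) (hn : 1 < n) :
    sparingNumber
      (graphJoin (SimpleGraph.pathGraph (n + 1)) (⊥ : SimpleGraph (Fin m))) = n := by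
  have hmem : n ∈ {k | ∃ f : Fin (n + 1) ⊕ Fin m → Finset ℕ,
      IsWeakIASI (FanG m n) f ∧ monoEdgeCount (FanG m n) f = k} :=
    ⟨fanLabel m n, fan_weak m n, fan_monoCount m n⟩
  refine le_antisymm (Nat.sInf_le hmem) (le_csInf ⟨n, hmem⟩ ?_)
  rintro k ⟨f, hf, rfl⟩
  exact fan_lower m n hm hn f hf
end

section
/- For integers m, n > 1, the sparing number of the (m,n)-complete friendship graph (windmill graph) K_1 + mK_n is m·n·(n−1)/2. -/
open Pointwise

/-- The disjoint union `mG` of `m` copies of the graph `G`. -/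
def graphCopies {V : Type*} (m : ℕ) (G : SimpleGraph V) : SimpleGraph (Fin m × V) where
  Adj x y := x.1 = y.1 ∧ G.Adj x.2 y.2
  symm := by
    constructor
    rintro ⟨i, u⟩ ⟨j, v⟩ ⟨h1, h2⟩
    exact ⟨h1.symm, G.adj_symm h2⟩
  loopless := by
    constructor
    rintro ⟨i, u⟩ ⟨-, h⟩
    exact G.irrefl h

lemma two_pow_mul_odd_inj : ∀ (a : ℕ) {c x y : ℕ}, Odd x → Odd y →
    2 ^ a * x = 2 ^ c * y → a = c ∧ x = y := by
  intro a
  induction a with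
  | zero =>
    intro c x y hx hy h
    cases c with
    | zero => simpa using h
    | succ c =>
      exfalso
      exact (Nat.not_even_iff_odd.mpr hx) ⟨2 ^ c * y, by rw [pow_zero, one_mul] at h; rw [h, pow_succ]; ring⟩
  | succ a ih =>
    intro c x y hx hy h
    cases c with
    | zero =>
      exfalso
      exact (Nat.not_even_iff_odd.mpr hy) ⟨2 ^ a * x, by rw [pow_zero, one_mul] at h; rw [← h, pow_succ]; ring⟩
    | succ c =>
      rw [pow_succ, pow_succ, mul_right_comm, mul_right_comm (2 ^ c)] at h
      have h' := Nat.eq_of_mul_eq_mul_right (by norm_num) h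
      obtain ⟨hc, hxy⟩ := ih hx hy h'
      exact ⟨by omega, hxy⟩

lemma pow2_sum_inj {a b c d : ℕ} (hab : a < b) (hcd : c < d)
    (h : 2 ^ a + 2 ^ b = 2 ^ c + 2 ^ d) : a = c ∧ b = d := by
  have e1 : 2 ^ a + 2 ^ b = 2 ^ a * (1 + 2 ^ (b - a)) := by
    rw [mul_add, mul_one, ← pow_add]
    congr 2
    omega
  have e2 : 2 ^ c + 2 ^ d = 2 ^ c * (1 + 2 ^ (d - c)) := by
    rw [mul_add, mul_one, ← pow_add]
    congr 2
    omega
  have o1 : Odd (1 + 2 ^ (b - a)) :=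
    Odd.add_even odd_one (Nat.even_pow.mpr ⟨even_two, by omega⟩)
  have o2 : Odd (1 + 2 ^ (d - c)) :=
    Odd.add_even odd_one (Nat.even_pow.mpr ⟨even_two, by omega⟩)
  obtain ⟨hac, hx⟩ := two_pow_mul_odd_inj a o1 o2 (by rw [← e1, ← e2, h])
  have h2 : 2 ^ (b - a) = 2 ^ (d - c) := by omega
  have h3 := Nat.pow_right_injective (le_refl 2) h2
  exact ⟨hac, by omega⟩

lemma pow2_sum_inj' {a b c d : ℕ} (hab : a ≠ b) (hcd : c ≠ d)
    (h : 2 ^ a + 2 ^ b = 2 ^ c + 2 ^ d) : (a = c ∧ b = d) ∨ (a = d ∧ b = c) := by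
  rcases hab.lt_or_gt with h1 | h1 <;> rcases hcd.lt_or_gt with h2 | h2
  · exact Or.inl (pow2_sum_inj h1 h2 h)
  · exact Or.inr ⟨(pow2_sum_inj h1 h2 (by omega)).1, (pow2_sum_inj h1 h2 (by omega)).2⟩
  · exact Or.inr ⟨(pow2_sum_inj h1 h2 (by omega)).2, (pow2_sum_inj h1 h2 (by omega)).1⟩
  · exact Or.inl ⟨(pow2_sum_inj h1 h2 (by omega)).2, (pow2_sum_inj h1 h2 (by omega)).1⟩
abbrev WG (m n : ℕ) : SimpleGraph (Fin 1 ⊕ Fin m × Fin n) :=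
  graphJoin (⊥ : SimpleGraph (Fin 1)) (graphCopies m (⊤ : SimpleGraph (Fin n)))

lemma wAdj_lr {m n : ℕ} (a : Fin 1) (p : Fin m × Fin n) :
    (WG m n).Adj (Sum.inl a) (Sum.inr p) := trivial

lemma wAdj_rr {m n : ℕ} {p q : Fin m × Fin n} (h1 : p.1 = q.1) (h2 : p.2 ≠ q.2) :
    (WG m n).Adj (Sum.inr p) (Sum.inr q) := ⟨h1, h2⟩

lemma wAdj_rr_iff {m n : ℕ} {p q : Fin m × Fin n} :
    (WG m n).Adj (Sum.inr p) (Sum.inr q) ↔ p.1 = q.1 ∧ p.2 ≠ q.2 := Iff.rfl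

lemma wAdj_ll {m n : ℕ} {a b : Fin 1} : ¬ (WG m n).Adj (Sum.inl a) (Sum.inl b) :=
  fun h => h

lemma singleton_endpoint {V : Type*} {G : SimpleGraph V} {f : V → Finset ℕ}
    (hf : IsWeakIASI G f) {u v : V} (h : G.Adj u v) :
    (f u).card = 1 ∨ (f v).card = 1 := by
  have h1 := hf.weak h
  have h2 := cauchy_davenport_add_of_linearOrder_isCancelAdd (hf.nonempty u) (hf.nonempty v)
  have hu := (hf.nonempty u).card_pos
  have hv := (hf.nonempty v).card_pos
  rw [h1] at h2
  rcases max_cases (f u).card (f v).card with ⟨he, _⟩ | ⟨he, _⟩ <;> omega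

lemma mono_edge {V : Type*} (f : V → Finset ℕ) {u v : V}
    (hu : (f u).card = 1) (hv : (f v).card = 1) :
    (edgeLabel f s(u, v)).card = 1 := by
  obtain ⟨x, hx⟩ := Finset.card_eq_one.mp hu
  obtain ⟨y, hy⟩ := Finset.card_eq_one.mp hv
  rw [edgeLabel_mk, hx, hy, Finset.singleton_add_singleton]
  exact Finset.card_singleton _

lemma card_le_ncard_of_inj {α β : Type*} [Fintype α] {g : α → β}
    (hg : Function.Injective g) {S : Set β} (hS : S.Finite)
    (hsub : Set.range g ⊆ S) : Fintype.card α ≤ S.ncard := by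
  have h1 : (Set.range g).ncard = Fintype.card α := by
    rw [← Set.image_univ, Set.ncard_image_of_injective _ hg, Set.ncard_univ,
      Nat.card_eq_fintype_card]
  rw [← h1]
  exact Set.ncard_le_ncard hsub hS

lemma k_inj {m n : ℕ} (hn : 0 < n) :
    Function.Injective (fun p : Fin m × Fin n => p.1.val * n + p.2.val + 1) := by
  rintro ⟨i, u⟩ ⟨j, v⟩ h
  simp only at h
  have h' : i.val * n + u.val = j.val * n + v.val := by omega
  have hult := u.isLt
  have hvlt := v.isLt
  have hi : i.val = j.val := by
    rcases lt_trichotomy i.val j.val with hl | he | hl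
    · have hm : (i.val + 1) * n ≤ j.val * n := Nat.mul_le_mul_right n hl
      rw [add_mul, one_mul] at hm
      omega
    · exact he
    · have hm : (j.val + 1) * n ≤ i.val * n := Nat.mul_le_mul_right n hl
      rw [add_mul, one_mul] at hm
      omega
  rw [hi] at h'
  have hu : u.val = v.val := by omega
  exact Prod.ext (Fin.ext hi) (Fin.ext hu)
lemma windmill_lb (m n : ℕ) {f : (Fin 1 ⊕ Fin m × Fin n) → Finset ℕ}
    (hf : IsWeakIASI (WG m n) f) :
    m * n.choose 2 ≤ monoEdgeCount (WG m n) f := by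
  classical
  set S : Set (Sym2 (Fin 1 ⊕ Fin m × Fin n)) :=
    {e ∈ (WG m n).edgeSet | (edgeLabel f e).card = 1} with hSdef
  have hmono : monoEdgeCount (WG m n) f = S.ncard := rfl
  set sg : Fin m × Fin n → Prop := fun p => (f (Sum.inr p)).card = 1 with hsgdef
  have key : ∀ (p q : Fin m × Fin n), p.1 = q.1 → p.2 ≠ q.2 → sg p ∨ sg q := by
    intro p q h1 h2
    exact singleton_endpoint hf (wAdj_rr h1 h2)
  have hubkey : ∀ p : Fin m × Fin n, ¬ sg p → (f (Sum.inl 0)).card = 1 := by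
    intro p hp
    exact (singleton_endpoint hf (wAdj_lr 0 p)).resolve_right hp
  set gfun : Fin m → Fin n → Fin n → Sym2 (Fin 1 ⊕ Fin m × Fin n) := fun i u v =>
    if sg (i, u) then
      (if sg (i, v) then s(Sum.inr (i, u), Sum.inr (i, v)) else s(Sum.inl 0, Sum.inr (i, u)))
    else if sg (i, v) then s(Sum.inl 0, Sum.inr (i, v))
    else s(Sum.inr (i, u), Sum.inr (i, v)) with hgfun
  have gsymm : ∀ i u v, gfun i u v = gfun i v u := by
    intro i u v
    simp only [hgfun]
    split_ifs <;> first | rfl | exact Sym2.eq_swap | tauto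
  set g : Fin m × {a : Sym2 (Fin n) // ¬ a.IsDiag} → Sym2 (Fin 1 ⊕ Fin m × Fin n) :=
    fun x => Sym2.lift ⟨gfun x.1, gsymm x.1⟩ x.2.1 with hgdef
  have gspec : ∀ i u v,
      (sg (i, u) ∧ sg (i, v) ∧ gfun i u v = s(Sum.inr (i, u), Sum.inr (i, v))) ∨
      (sg (i, u) ∧ ¬ sg (i, v) ∧ gfun i u v = s(Sum.inl 0, Sum.inr (i, u))) ∨
      (¬ sg (i, u) ∧ sg (i, v) ∧ gfun i u v = s(Sum.inl 0, Sum.inr (i, v))) ∨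
      (¬ sg (i, u) ∧ ¬ sg (i, v)) := by
    intro i u v
    simp only [hgfun]
    split_ifs with h1 h2 h3 <;> tauto
  have hrange : ∀ x, g x ∈ S := by
    rintro ⟨i, p, hp⟩
    induction p using Sym2.ind with
    | _ u v =>
      rw [Sym2.mk_isDiag_iff] at hp
      simp only [hgdef, Sym2.lift_mk]
      rcases gspec i u v with ⟨hu, hv, hL⟩ | ⟨hu, hv, hL⟩ | ⟨hu, hv, hL⟩ | ⟨hu, hv⟩
      · rw [hL]
        exact ⟨wAdj_rr rfl hp, mono_edge f hu hv⟩
      · rw [hL]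
        exact ⟨wAdj_lr 0 (i, u), mono_edge f (hubkey (i, v) hv) hu⟩
      · rw [hL]
        exact ⟨wAdj_lr 0 (i, v), mono_edge f (hubkey (i, u) hu) hv⟩
      · exact absurd (key (i, u) (i, v) rfl hp) (by simp [hu, hv])
  have ginj : Function.Injective g := by
    rintro ⟨i, p, hp⟩ ⟨j, q, hq⟩ hgeq
    induction p using Sym2.ind with
    | _ u v =>
    induction q using Sym2.ind with
    | _ x y =>
      rw [Sym2.mk_isDiag_iff] at hp hq
      simp only [hgdef, Sym2.lift_mk] at hgeq
      simp only [Prod.mk.injEq, Subtype.mk.injEq]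
      rcases gspec i u v with ⟨hu, hv, hL⟩ | ⟨hu, hv, hL⟩ | ⟨hu, hv, hL⟩ | ⟨hu, hv⟩ <;>
        [skip; skip; skip;
          exact absurd (key (i, u) (i, v) rfl hp) (by simp [hu, hv])] <;>
      rcases gspec j x y with ⟨hx, hy, hR⟩ | ⟨hx, hy, hR⟩ | ⟨hx, hy, hR⟩ | ⟨hx, hy⟩ <;>
        [skip; skip; skip;
          exact absurd (key (j, x) (j, y) rfl hq) (by simp [hx, hy]);
          skip; skip; skip;
          exact absurd (key (j, x) (j, y) rfl hq) (by simp [hx, hy]);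
          skip; skip; skip;
          exact absurd (key (j, x) (j, y) rfl hq) (by simp [hx, hy])] <;>
      rw [hL, hR] at hgeq
      -- copy/copy case (TT,TT)
      · rw [Sym2.eq_iff] at hgeq
        rcases hgeq with ⟨h1, h2⟩ | ⟨h1, h2⟩ <;>
          simp only [Sum.inr.injEq, Prod.mk.injEq] at h1 h2
        · exact ⟨h1.1, by rw [h1.2, h2.2]⟩
        · exact ⟨h1.1, by rw [h1.2, h2.2]; exact Sym2.eq_swap⟩
      -- (TT, TF) copy vs spoke
      · simp [Sym2.eq_iff] at hgeq
      -- (TT, FT)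
      · simp [Sym2.eq_iff] at hgeq
      -- (TF, TT)
      · simp [Sym2.eq_iff] at hgeq
      -- (TF, TF): spoke u = spoke x
      · rw [Sym2.eq_iff] at hgeq
        rcases hgeq with ⟨h1, h2⟩ | ⟨h1, h2⟩ <;>
          simp only [Sum.inr.injEq, Prod.mk.injEq, reduceCtorEq] at h1 h2
        obtain ⟨hij, hux⟩ := h2
        subst hij
        have hvy : v = y := by
          by_contra hne
          rcases key (i, v) (i, y) rfl hne with h | h
          · exact hv h
          · exact hy h
        exact ⟨rfl, by rw [hux, hvy]⟩
      -- (TF, FT): spoke u = spoke y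
      · rw [Sym2.eq_iff] at hgeq
        rcases hgeq with ⟨h1, h2⟩ | ⟨h1, h2⟩ <;>
          simp only [Sum.inr.injEq, Prod.mk.injEq, reduceCtorEq] at h1 h2
        obtain ⟨hij, huy⟩ := h2
        subst hij
        have hvx : v = x := by
          by_contra hne
          rcases key (i, v) (i, x) rfl hne with h | h
          · exact hv h
          · exact hx h
        exact ⟨rfl, by rw [huy, hvx]; exact Sym2.eq_swap⟩
      -- (FT, TT)
      · simp [Sym2.eq_iff] at hgeq
      -- (FT, TF): spoke v = spoke x
      · rw [Sym2.eq_iff] at hgeq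
        rcases hgeq with ⟨h1, h2⟩ | ⟨h1, h2⟩ <;>
          simp only [Sum.inr.injEq, Prod.mk.injEq, reduceCtorEq] at h1 h2
        obtain ⟨hij, hvx⟩ := h2
        subst hij
        have huy : u = y := by
          by_contra hne
          rcases key (i, u) (i, y) rfl hne with h | h
          · exact hu h
          · exact hy h
        exact ⟨rfl, by rw [hvx, huy]; exact Sym2.eq_swap⟩
      -- (FT, FT): spoke v = spoke y
      · rw [Sym2.eq_iff] at hgeq
        rcases hgeq with ⟨h1, h2⟩ | ⟨h1, h2⟩ <;>
          simp only [Sum.inr.injEq, Prod.mk.injEq, reduceCtorEq] at h1 h2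
        obtain ⟨hij, hvy⟩ := h2
        subst hij
        have hux : u = x := by
          by_contra hne
          rcases key (i, u) (i, x) rfl hne with h | h
          · exact hu h
          · exact hx h
        exact ⟨rfl, by rw [hvy, hux]⟩
  have hcard : Fintype.card (Fin m × {a : Sym2 (Fin n) // ¬ a.IsDiag}) = m * n.choose 2 := by
    rw [Fintype.card_prod, Fintype.card_fin, Sym2.card_subtype_not_diag, Fintype.card_fin]
  rw [hmono, ← hcard]
  exact card_le_ncard_of_inj ginj (Set.toFinite S) (Set.range_subset_iff.mpr hrange)
lemma spoke_label_eq (c : ℕ) : ({0, 1} : Finset ℕ) + {c} = {c, c + 1} := by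
  ext x
  simp [Finset.mem_add]
  omega

lemma pair_shift_eq {A B : ℕ} (h : ({A, A + 1} : Finset ℕ) = {B, B + 1}) : A = B := by
  have h1 := Finset.ext_iff.mp h A
  have h2 := Finset.ext_iff.mp h B
  simp only [Finset.mem_insert, Finset.mem_singleton, true_or, eq_self_iff_true,
    true_iff, iff_true, or_true] at h1 h2
  omega

lemma spoke_card (c : ℕ) : ({c, c + 1} : Finset ℕ).card = 2 := by
  rw [Finset.card_insert_of_notMem (by simp)]
  rfl

lemma ncard_range_inj {α β : Type*} [Fintype α] {g : α → β} (hg : Function.Injective g) :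
    (Set.range g).ncard = Fintype.card α := by
  rw [← Set.image_univ, Set.ncard_image_of_injective _ hg, Set.ncard_univ,
    Nat.card_eq_fintype_card]

lemma windmill_construction (m n : ℕ) (hn : 1 < n) :
    ∃ f : (Fin 1 ⊕ Fin m × Fin n) → Finset ℕ, IsWeakIASI (WG m n) f ∧
      monoEdgeCount (WG m n) f = m * n.choose 2 := by
  classical
  have hn0 : 0 < n := by omega
  set kf : Fin m × Fin n → ℕ := fun p => p.1.val * n + p.2.val + 1 with hkf
  have kinj : Function.Injective kf := k_inj hn0
  set F : (Fin 1 ⊕ Fin m × Fin n) → Finset ℕ :=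
    Sum.elim (fun _ => ({0, 1} : Finset ℕ)) (fun p => {2 ^ kf p}) with hF
  have hFl : ∀ a : Fin 1, F (Sum.inl a) = {0, 1} := fun a => rfl
  have hFr : ∀ p : Fin m × Fin n, F (Sum.inr p) = {2 ^ kf p} := fun p => rfl
  have hibase : ∀ p q : Fin m × Fin n, F (Sum.inr p) = F (Sum.inr q) → p = q := by
    intro p q h
    rw [hFr, hFr, Finset.singleton_inj] at h
    exact kinj (Nat.pow_right_injective (le_refl 2) h)
  have hspoke : ∀ (a : Fin 1) (p : Fin m × Fin n),
      F (Sum.inl a) + F (Sum.inr p) = {2 ^ kf p, 2 ^ kf p + 1} := by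
    intro a p
    rw [hFl, hFr]
    exact spoke_label_eq _
  have spokeEq : ∀ p q : Fin m × Fin n,
      ({2 ^ kf p, 2 ^ kf p + 1} : Finset ℕ) = {2 ^ kf q, 2 ^ kf q + 1} → p = q := by
    intro p q h
    exact kinj (Nat.pow_right_injective (le_refl 2) (pair_shift_eq h))
  have hkfne : ∀ p q : Fin m × Fin n, p.2 ≠ q.2 → kf p ≠ kf q := by
    intro p q h hk
    exact h (congrArg Prod.snd (kinj hk))
  have weak : IsWeakIASI (WG m n) F := by
    refine ⟨⟨?_, ?_, ?_⟩, ?_⟩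
    · rintro (a | p)
      · rw [hFl]; exact Finset.insert_nonempty _ _
      · rw [hFr]; exact Finset.singleton_nonempty _
    · rintro (a | p) (b | q) h
      · exact congrArg Sum.inl (Subsingleton.elim a b)
      · exact absurd (congrArg Finset.card h)
          (by rw [hFl, hFr, Finset.card_singleton]; decide)
      · exact absurd (congrArg Finset.card h)
          (by rw [hFl, hFr, Finset.card_singleton]; decide)
      · exact congrArg Sum.inr (hibase p q h)
    · intro e1 he1 e2 he2 heq
      induction e1 using Sym2.ind with
      | _ x y =>
      induction e2 using Sym2.ind with
      | _ z w =>
      rw [SimpleGraph.mem_edgeSet] at he1 he2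
      rw [edgeLabel_mk, edgeLabel_mk] at heq
      rcases x with a | p <;> rcases y with b | q <;>
        first
          | exact (wAdj_ll he1).elim
          | rcases z with c | r <;> rcases w with d | t <;>
              first
                | exact (wAdj_ll he2).elim
                | skip
      -- (lr, lr)
      · rw [hspoke a q, hspoke c t] at heq
        rw [spokeEq q t heq, Subsingleton.elim a c]
      -- (lr, rl)
      · rw [hspoke a q, add_comm (F (Sum.inr r)), hspoke d r] at heq
        rw [spokeEq q r heq]
        exact Sym2.eq_iff.mpr (Or.inr ⟨congrArg Sum.inl (Subsingleton.elim a d), rfl⟩)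
      -- (lr, rr)
      · rw [hspoke a q, hFr, hFr, Finset.singleton_add_singleton] at heq
        exact absurd (congrArg Finset.card heq)
          (by rw [spoke_card, Finset.card_singleton]; omega)
      -- (rl, lr)
      · rw [add_comm (F (Sum.inr p)), hspoke b p, hspoke c t] at heq
        rw [spokeEq p t heq]
        exact Sym2.eq_iff.mpr (Or.inr ⟨rfl, congrArg Sum.inl (Subsingleton.elim b c)⟩)
      -- (rl, rl)
      · rw [add_comm (F (Sum.inr p)), hspoke b p, add_comm (F (Sum.inr r)),
          hspoke d r] at heq
        rw [spokeEq p r heq, Subsingleton.elim b d]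
      -- (rl, rr)
      · rw [add_comm (F (Sum.inr p)), hspoke b p, hFr, hFr,
          Finset.singleton_add_singleton] at heq
        exact absurd (congrArg Finset.card heq)
          (by rw [spoke_card, Finset.card_singleton]; omega)
      -- (rr, lr)
      · rw [hFr, hFr, Finset.singleton_add_singleton, hspoke c t] at heq
        exact absurd (congrArg Finset.card heq)
          (by rw [spoke_card, Finset.card_singleton]; omega)
      -- (rr, rl)
      · rw [hFr, hFr, Finset.singleton_add_singleton, add_comm (F (Sum.inr r)),
          hspoke d r] at heq
        exact absurd (congrArg Finset.card heq)
          (by rw [spoke_card, Finset.card_singleton]; omega)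
      -- (rr, rr)
      · rw [hFr, hFr, hFr, hFr, Finset.singleton_add_singleton,
          Finset.singleton_add_singleton, Finset.singleton_inj] at heq
        rcases pow2_sum_inj' (hkfne p q he1.2) (hkfne r t he2.2) heq with ⟨h1, h2⟩ | ⟨h1, h2⟩
        · rw [kinj h1, kinj h2]
        · rw [kinj h1, kinj h2]
          exact Sym2.eq_swap
    · rintro (a | p) (b | q) hadj
      · exact (wAdj_ll hadj).elim
      · rw [hspoke a q, spoke_card, hFl, hFr, Finset.card_singleton]
        rfl
      · rw [add_comm (F (Sum.inr p)), hspoke b p, spoke_card, hFl, hFr,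
          Finset.card_singleton]
        rfl
      · rw [hFr, hFr, Finset.singleton_add_singleton, Finset.card_singleton,
          Finset.card_singleton]
        rfl
  refine ⟨F, weak, ?_⟩
  set g0 : Fin m × {a : Sym2 (Fin n) // ¬ a.IsDiag} → Sym2 (Fin 1 ⊕ Fin m × Fin n) :=
    fun x => Sym2.map (fun u => Sum.inr (x.1, u)) x.2.1 with hg0
  set S : Set (Sym2 (Fin 1 ⊕ Fin m × Fin n)) :=
    {e ∈ (WG m n).edgeSet | (edgeLabel F e).card = 1} with hSdef
  have hmono : monoEdgeCount (WG m n) F = S.ncard := rfl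
  have hsub1 : S ⊆ Set.range g0 := by
    intro e he
    induction e using Sym2.ind with
    | _ x y =>
      obtain ⟨he1, hc⟩ := he
      rw [SimpleGraph.mem_edgeSet] at he1
      rw [edgeLabel_mk] at hc
      rcases x with a | ⟨i, u⟩ <;> rcases y with b | ⟨j, v⟩
      · exact (wAdj_ll he1).elim
      · rw [hspoke a (j, v), spoke_card] at hc
        omega
      · rw [add_comm (F (Sum.inr (i, u))), hspoke b (i, u), spoke_card] at hc
        omega
      · obtain ⟨hij, huv⟩ := he1
        simp only at hij huv
        subst hij
        refine ⟨⟨i, ⟨s(u, v), by rw [Sym2.mk_isDiag_iff]; exact huv⟩⟩, ?_⟩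
        simp only [hg0, Sym2.map_pair_eq]
  have hsub2 : Set.range g0 ⊆ S := by
    rw [Set.range_subset_iff]
    rintro ⟨i, p, hp⟩
    induction p using Sym2.ind with
    | _ u v =>
      rw [Sym2.mk_isDiag_iff] at hp
      simp only [hg0, Sym2.map_pair_eq]
      refine ⟨wAdj_rr rfl hp, ?_⟩
      rw [edgeLabel_mk, hFr, hFr, Finset.singleton_add_singleton]
      exact Finset.card_singleton _
  have g0inj : Function.Injective g0 := by
    rintro ⟨i, p, hp⟩ ⟨j, q, hq⟩ h
    induction p using Sym2.ind with
    | _ u v =>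
    induction q using Sym2.ind with
    | _ x y =>
      simp only [hg0, Sym2.map_pair_eq, Sym2.eq_iff, Sum.inr.injEq, Prod.mk.injEq] at h
      simp only [Prod.mk.injEq, Subtype.mk.injEq]
      rcases h with ⟨⟨h1, h2⟩, h3, h4⟩ | ⟨⟨h1, h2⟩, h3, h4⟩
      · exact ⟨h1, by rw [h2, h4]⟩
      · exact ⟨h1, by rw [h2, h4]; exact Sym2.eq_swap⟩
  rw [hmono, Set.Subset.antisymm hsub1 hsub2, ncard_range_inj g0inj,
    Fintype.card_prod, Fintype.card_fin, Sym2.card_subtype_not_diag, Fintype.card_fin]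
/-- For integers `m, n > 1`, the sparing number of the `(m,n)`-complete friendship
(windmill) graph `K_1 + mK_n` is `m·n·(n−1)/2`. -/
theorem windmill_sparingNumber (m n : ℕ) (hm : 1 < m) (hn : 1 < n) :
    sparingNumber
      (graphJoin (⊥ : SimpleGraph (Fin 1))
        (graphCopies m (⊤ : SimpleGraph (Fin n)))) = m * n * (n - 1) / 2 := by
  obtain ⟨F, hW, hC⟩ := windmill_construction m n hn
  have heq : m * n.choose 2 = m * n * (n - 1) / 2 := by
    rw [Nat.choose_two_right]
    have h2 : 2 ∣ n * (n - 1) := by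
      have he := Nat.even_mul_succ_self (n - 1)
      rw [Nat.sub_add_cancel (by omega : 1 ≤ n)] at he
      rw [mul_comm]
      exact he.two_dvd
    rw [← Nat.mul_div_assoc m h2, ← mul_assoc]
  rw [← heq]
  show sparingNumber (WG m n) = m * n.choose 2
  unfold sparingNumber
  have hmem : m * n.choose 2 ∈
      {k | ∃ f, IsWeakIASI (WG m n) f ∧ monoEdgeCount (WG m n) f = k} := ⟨F, hW, hC⟩
  apply le_antisymm
  · exact Nat.sInf_le hmem
  · apply le_csInf ⟨m * n.choose 2, hmem⟩
    rintro k ⟨f, hf, rfl⟩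
    exact windmill_lb m n hf
end
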